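/- arXiv:2108.06729 — 2 statements merged into one kernel-verified Lean document; each statement's English description precedes it below -/
import Mathlib

section
/- Let X be a separable Hilbert space, let Φ₀, Φ₁ be Borel probability measures on X × X with finite second moments, and for s, t ∈ ℝ let exp^s(x,v) := x + sv. Define f(s,t) := (1/2) W₂²(exp^s_♯Φ₀, exp^t_♯Φ₁) and φ² := ∫|v|²dΦ₀ + ∫|v|²dΦ₁. Then the function (s,t) ↦ f(s,t) - (φ²/2)(s² + t²) is concave on ℝ². -/
open MeasureTheory Filter Topology
open scoped RealInnerProductSpace ENNReal

noncomputable section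

/-- `γ` is a coupling of `μ` and `ν` if its marginals are `μ` and `ν`. -/
def IsCoupling {α β : Type*} [MeasurableSpace α] [MeasurableSpace β]
    (γ : MeasureTheory.Measure (α × β)) (μ : MeasureTheory.Measure α)
    (ν : MeasureTheory.Measure β) : Prop :=
  γ.map Prod.fst = μ ∧ γ.map Prod.snd = ν

variable {X : Type*} [NormedAddCommGroup X] [InnerProductSpace ℝ X]
  [MeasurableSpace X] [BorelSpace X]

/-- The squared 2-Wasserstein distance, as the infimum of transport costs over couplings. -/
def W2sq (μ ν : Measure X) : ℝ :=
  sInf {c : ℝ | ∃ γ : Measure (X × X), IsProbabilityMeasure γ ∧ IsCoupling γ μ ν ∧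
    c = ∫ p, ‖p.1 - p.2‖ ^ 2 ∂γ}

/-- The 2-Wasserstein distance. -/
def W2 (μ ν : Measure X) : ℝ := Real.sqrt (W2sq μ ν)

/-- The exponential map `exp^t(x,v) = x + t v` on the tangent bundle `X × X`. -/
def expMap (t : ℝ) : X × X → X := fun p => p.1 + t • p.2

/-- A measure has finite second moment if `‖x‖²` is integrable. -/
def FiniteSecondMoment (μ : Measure X) : Prop := Integrable (fun x => ‖x‖ ^ 2) μ

/-! ### Auxiliary lemmas -/

section Aux

open ProbabilityTheory

set_option linter.unusedSectionVars false

lemma continuous_expMap (t : ℝ) : Continuous (expMap (X := X) t) :=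
  continuous_fst.add (continuous_snd.const_smul t)

lemma measurable_expMap [SecondCountableTopology X] (t : ℝ) :
    Measurable (expMap (X := X) t) := (continuous_expMap t).measurable

lemma hilbert_sq_id (a b : X) {α β : ℝ} (h : α + β = 1) :
    ‖α • a + β • b‖ ^ 2 = α * ‖a‖ ^ 2 + β * ‖b‖ ^ 2 - α * β * ‖a - b‖ ^ 2 := by
  have hβ : β = 1 - α := by linarith
  subst hβ
  rw [norm_add_sq_real, norm_sub_sq_real, norm_smul, norm_smul,
    real_inner_smul_left, real_inner_smul_right, Real.norm_eq_abs, Real.norm_eq_abs,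
    mul_pow, mul_pow, sq_abs, sq_abs]
  ring

lemma norm_smul_sub_smul_sq_le (c d : ℝ) (v w : X) :
    ‖c • v - d • w‖ ^ 2 ≤ (c ^ 2 + d ^ 2) * (‖v‖ ^ 2 + ‖w‖ ^ 2) := by
  have h : ‖c • v - d • w‖ ≤ |c| * ‖v‖ + |d| * ‖w‖ := by
    refine (norm_sub_le _ _).trans ?_
    rw [norm_smul, norm_smul, Real.norm_eq_abs, Real.norm_eq_abs]
  have h2 : ‖c • v - d • w‖ ^ 2 ≤ (|c| * ‖v‖ + |d| * ‖w‖) ^ 2 :=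
    pow_le_pow_left₀ (norm_nonneg _) h 2
  nlinarith [sq_abs c, sq_abs d, sq_nonneg (|c| * ‖w‖ - |d| * ‖v‖)]

lemma cost_bound (s t : ℝ) (p q : X × X) :
    ‖expMap s p - expMap t q‖ ^ 2 ≤
      (4 + 4 * s ^ 2) * (‖p.1‖ ^ 2 + ‖p.2‖ ^ 2) + (4 + 4 * t ^ 2) * (‖q.1‖ ^ 2 + ‖q.2‖ ^ 2) := by
  have h1 : ‖expMap s p - expMap t q‖ ≤ ‖p.1‖ + |s| * ‖p.2‖ + (‖q.1‖ + |t| * ‖q.2‖) := by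
    refine (norm_sub_le _ _).trans (add_le_add ?_ ?_) <;>
      · refine (norm_add_le _ _).trans ?_
        rw [norm_smul, Real.norm_eq_abs]
  have h2 : ‖expMap s p - expMap t q‖ ^ 2 ≤ (‖p.1‖ + |s| * ‖p.2‖ + (‖q.1‖ + |t| * ‖q.2‖)) ^ 2 :=
    pow_le_pow_left₀ (norm_nonneg _) h1 2
  nlinarith [sq_abs s, sq_abs t, sq_nonneg (‖p.1‖ - |s| * ‖p.2‖), sq_nonneg (‖p.1‖ - ‖q.1‖),
    sq_nonneg (‖p.1‖ - |t| * ‖q.2‖), sq_nonneg (|s| * ‖p.2‖ - ‖q.1‖),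
    sq_nonneg (|s| * ‖p.2‖ - |t| * ‖q.2‖), sq_nonneg (‖q.1‖ - |t| * ‖q.2‖),
    sq_nonneg (s * ‖p.1‖), sq_nonneg (s * ‖p.2‖), sq_nonneg (t * ‖q.1‖), sq_nonneg (t * ‖q.2‖),
    sq_nonneg ‖p.1‖, sq_nonneg ‖p.2‖, sq_nonneg ‖q.1‖, sq_nonneg ‖q.2‖]

/-- A probability measure giving full mass to a fiber of `f` pushes forward to a Dirac mass. -/
lemma map_eq_dirac' {T : Type*} [MeasurableSpace T] (m : Measure T) [IsProbabilityMeasure m]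
    {f : T → X} (hf : Measurable f) {x : X} (h : m {p | f p = x} = 1) :
    m.map f = Measure.dirac x := by
  have hfib : MeasurableSet {p | f p = x} := hf (measurableSet_singleton x)
  ext A hA
  rw [Measure.map_apply hf hA, Measure.dirac_apply' x hA]
  by_cases hx : x ∈ A
  · have h1 : {p | f p = x} ⊆ f ⁻¹' A := fun p hp => by
      simp only [Set.mem_setOf_eq] at hp; simp [Set.mem_preimage, hp, hx]
    have h2 : m {p | f p = x} ≤ m (f ⁻¹' A) := measure_mono h1
    rw [h] at h2
    rw [Set.indicator_of_mem hx]
    exact le_antisymm ((measure_mono (Set.subset_univ _)).trans_eq measure_univ) h2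
  · have h2 : f ⁻¹' A ⊆ {p | f p = x}ᶜ := fun p hp hpx => hx (by rwa [← hpx])
    have hc : m {p | f p = x}ᶜ = 0 := by
      rw [measure_compl hfib (measure_ne_top _ _), h, measure_univ, tsub_self]
    rw [Set.indicator_of_notMem hx]
    exact measure_mono_null h2 hc

/-- Transfer of integrals through the first marginal. -/
lemma integral_comp_fst {T₁ T₂ : Type*} [MeasurableSpace T₁] [MeasurableSpace T₂]
    (Θ : Measure (T₁ × T₂)) (Φ : Measure T₁) (h : Θ.map Prod.fst = Φ) {f : T₁ → ℝ}
    (hf : AEStronglyMeasurable f Φ) :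
    (∫ z, f z.1 ∂Θ = ∫ x, f x ∂Φ) ∧ (Integrable f Φ → Integrable (fun z => f z.1) Θ) := by
  subst h
  exact ⟨(integral_map measurable_fst.aemeasurable hf).symm,
    fun hi => (integrable_map_measure hf measurable_fst.aemeasurable).mp hi⟩

/-- Transfer of integrals through the second marginal. -/
lemma integral_comp_snd {T₁ T₂ : Type*} [MeasurableSpace T₁] [MeasurableSpace T₂]
    (Θ : Measure (T₁ × T₂)) (Φ : Measure T₂) (h : Θ.map Prod.snd = Φ) {f : T₂ → ℝ}
    (hf : AEStronglyMeasurable f Φ) :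
    (∫ z, f z.2 ∂Θ = ∫ x, f x ∂Φ) ∧ (Integrable f Φ → Integrable (fun z => f z.2) Θ) := by
  subst h
  exact ⟨(integral_map measurable_snd.aemeasurable hf).symm,
    fun hi => (integrable_map_measure hf measurable_snd.aemeasurable).mp hi⟩

section Polish

variable [CompleteSpace X] [SecondCountableTopology X]

/-- Disintegration of `Φ` along `expMap s`. -/
lemma exists_fiber_kernel (Φ : Measure (X × X)) [IsProbabilityMeasure Φ] (s : ℝ) :
    ∃ κ : Kernel X (X × X), IsMarkovKernel κ ∧
      (∀ A : Set (X × X), MeasurableSet A →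
        ∫⁻ x, κ x A ∂(Φ.map (expMap s)) = Φ A) ∧
      (∀ᵐ x ∂(Φ.map (expMap s)), (κ x).map (expMap s) = Measure.dirac x) := by
  haveI : Nonempty X := ⟨0⟩
  have hms := measurable_expMap (X := X) s
  set μ := Φ.map (expMap s) with hμ
  have hpair : Measurable (fun p : X × X => (expMap s p, p)) := hms.prodMk measurable_id
  set ρ : Measure (X × (X × X)) := Φ.map (fun p => (expMap s p, p)) with hρ
  haveI : IsProbabilityMeasure ρ := Measure.isProbabilityMeasure_map hpair.aemeasurable
  haveI : IsProbabilityMeasure μ := Measure.isProbabilityMeasure_map hms.aemeasurable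
  have hfst : ρ.fst = μ := by
    rw [Measure.fst, hρ, Measure.map_map measurable_fst hpair]
    rfl
  have hdis : μ ⊗ₘ ρ.condKernel = ρ := by
    rw [← hfst]; exact ρ.disintegrate _
  refine ⟨ρ.condKernel, inferInstance, ?_, ?_⟩
  · intro A hA
    have h1 : (μ ⊗ₘ ρ.condKernel) (Set.univ ×ˢ A) = ∫⁻ x, ρ.condKernel x A ∂μ := by
      rw [Measure.compProd_apply_prod MeasurableSet.univ hA, Measure.restrict_univ]
    have h2 : ρ (Set.univ ×ˢ A) = Φ A := by
      rw [hρ, Measure.map_apply hpair (MeasurableSet.univ.prod hA)]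
      congr 1
      ext p
      simp
    rw [← h1, hdis, h2]
  · -- a.e. fiber concentration
    set G : Set (X × (X × X)) := {q | expMap s q.2 = q.1} with hG
    have hGm : MeasurableSet G := by
      have : G = (fun q : X × (X × X) => expMap s q.2 - q.1) ⁻¹' {0} := by
        ext q; simp [hG, sub_eq_zero]
      rw [this]
      exact ((hms.comp measurable_snd).sub measurable_fst) (measurableSet_singleton 0)
    have hρG : ρ G = 1 := by
      rw [hρ, Measure.map_apply hpair hGm]
      have : (fun p : X × X => (expMap s p, p)) ⁻¹' G = Set.univ := by
        ext p; simp [hG]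
      rw [this, measure_univ]
    have hmeasf : Measurable fun x => ρ.condKernel x (Prod.mk x ⁻¹' G) :=
      Kernel.measurable_kernel_prodMk_left hGm
    have hle : ∀ x, ρ.condKernel x (Prod.mk x ⁻¹' G) ≤ 1 := fun x => prob_le_one
    have hint : ∫⁻ x, ρ.condKernel x (Prod.mk x ⁻¹' G) ∂μ = 1 := by
      rw [← Measure.compProd_apply hGm, hdis, hρG]
    have hzero : ∫⁻ x, (1 - ρ.condKernel x (Prod.mk x ⁻¹' G)) ∂μ = 0 := by
      rw [lintegral_sub hmeasf (by rw [hint]; exact ENNReal.one_ne_top)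
        (Filter.Eventually.of_forall hle), hint, lintegral_one, measure_univ, tsub_self]
    have hae : ∀ᵐ x ∂μ, (1 : ℝ≥0∞) - ρ.condKernel x (Prod.mk x ⁻¹' G) = 0 :=
      (lintegral_eq_zero_iff (measurable_const.sub hmeasf)).mp hzero
    filter_upwards [hae] with x hx
    have h1 : ρ.condKernel x (Prod.mk x ⁻¹' G) = 1 :=
      le_antisymm (hle x) (tsub_eq_zero_iff_le.mp hx)
    have h2 : (Prod.mk x ⁻¹' G) = {p : X × X | expMap s p = x} := by
      ext p; simp [hG]
    rw [h2] at h1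
    exact map_eq_dirac' _ hms h1

/-- Lifting of a coupling of the pushforwards to a coupling of `Φ₀, Φ₁`. -/
lemma exists_lift (Φ₀ Φ₁ : Measure (X × X)) [IsProbabilityMeasure Φ₀] [IsProbabilityMeasure Φ₁]
    (s t : ℝ) (γ : Measure (X × X)) [IsProbabilityMeasure γ]
    (hγ : IsCoupling γ (Φ₀.map (expMap s)) (Φ₁.map (expMap t))) :
    ∃ Θ : Measure ((X × X) × (X × X)), IsProbabilityMeasure Θ ∧ IsCoupling Θ Φ₀ Φ₁ ∧
      Θ.map (Prod.map (expMap s) (expMap t)) = γ := by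
  obtain ⟨κ₀, hκ₀m, hκ₀b, hκ₀f⟩ := exists_fiber_kernel Φ₀ s
  obtain ⟨κ₁, hκ₁m, hκ₁b, hκ₁f⟩ := exists_fiber_kernel Φ₁ t
  set K : Kernel (X × X) ((X × X) × (X × X)) :=
    (κ₀.comap Prod.fst measurable_fst).prod (κ₁.comap Prod.snd measurable_snd) with hK
  have hKapp : ∀ z : X × X, K z = (κ₀ z.1).prod (κ₁ z.2) := by
    intro z
    rw [hK, Kernel.prod_apply, Kernel.comap_apply, Kernel.comap_apply]
  haveI : IsMarkovKernel K := by
    rw [hK]; infer_instance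
  set Θ : Measure ((X × X) × (X × X)) := γ.bind K with hΘ
  have hKmeas : Measurable (K : X × X → Measure ((X × X) × (X × X))) := K.measurable
  haveI hPΘ : IsProbabilityMeasure Θ := by
    constructor
    rw [hΘ, Measure.bind_apply MeasurableSet.univ hKmeas.aemeasurable]
    simp [measure_univ]
  refine ⟨Θ, hPΘ, ⟨?_, ?_⟩, ?_⟩
  · -- first marginal
    ext A hA
    rw [Measure.map_apply measurable_fst hA, hΘ,
      Measure.bind_apply (measurable_fst hA) hKmeas.aemeasurable]
    have h1 : ∀ z : X × X, K z (Prod.fst ⁻¹' A) = κ₀ z.1 A := by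
      intro z
      rw [hKapp z, ← Set.prod_univ, Measure.prod_prod, measure_univ, mul_one]
    simp_rw [h1]
    rw [← lintegral_map (Kernel.measurable_coe κ₀ hA) measurable_fst, hγ.1, hκ₀b A hA]
  · -- second marginal
    ext A hA
    rw [Measure.map_apply measurable_snd hA, hΘ,
      Measure.bind_apply (measurable_snd hA) hKmeas.aemeasurable]
    have h1 : ∀ z : X × X, K z (Prod.snd ⁻¹' A) = κ₁ z.2 A := by
      intro z
      rw [hKapp z, ← Set.univ_prod, Measure.prod_prod, measure_univ, one_mul]
    simp_rw [h1]
    rw [← lintegral_map (Kernel.measurable_coe κ₁ hA) measurable_snd, hγ.2, hκ₁b A hA]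
  · -- pushforward is γ
    have hF : Measurable (Prod.map (expMap (X := X) s) (expMap (X := X) t)) :=
      (measurable_expMap s).prodMap (measurable_expMap t)
    have hae0 : ∀ᵐ z ∂γ, (κ₀ z.1).map (expMap s) = Measure.dirac z.1 := by
      have h := hκ₀f
      rw [← hγ.1] at h
      exact ae_of_ae_map measurable_fst.aemeasurable h
    have hae1 : ∀ᵐ z ∂γ, (κ₁ z.2).map (expMap t) = Measure.dirac z.2 := by
      have h := hκ₁f
      rw [← hγ.2] at h
      exact ae_of_ae_map measurable_snd.aemeasurable h
    ext A hA
    rw [Measure.map_apply hF hA, hΘ,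
      Measure.bind_apply (hF hA) hKmeas.aemeasurable]
    have key : ∀ᵐ z ∂γ, K z (Prod.map (expMap s) (expMap t) ⁻¹' A) = A.indicator 1 z := by
      filter_upwards [hae0, hae1] with z h0 h1
      have hmap : (K z).map (Prod.map (expMap s) (expMap t)) = Measure.dirac z := by
        rw [hKapp z, ← Measure.map_prod_map _ _ (measurable_expMap s) (measurable_expMap t),
          h0, h1, Measure.dirac_prod_dirac]
      rw [← Measure.map_apply hF hA, hmap, Measure.dirac_apply' z hA]
    rw [lintegral_congr_ae key, lintegral_indicator_one hA]

end Polish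

lemma final_arith (W0 W1 Wm I0 I1 D P s0 t0 s1 t1 a sm tm eps : ℝ)
    (key : a * I0 + (1 - a) * I1 - a * (1 - a) * D < Wm + 2 * eps)
    (k0 : a * W0 ≤ a * I0) (k1 : (1 - a) * W1 ≤ (1 - a) * I1)
    (k2 : a * (1 - a) * D ≤ a * (1 - a) * (((s0 - s1) ^ 2 + (t0 - t1) ^ 2) * P))
    (hq : P * (sm ^ 2 + tm ^ 2) = P * (a * (s0 ^ 2 + t0 ^ 2) + (1 - a) * (s1 ^ 2 + t1 ^ 2) -
      a * (1 - a) * ((s0 - s1) ^ 2 + (t0 - t1) ^ 2))) :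
    a * (1 / 2 * W0 - P / 2 * (s0 ^ 2 + t0 ^ 2)) +
      (1 - a) * (1 / 2 * W1 - P / 2 * (s1 ^ 2 + t1 ^ 2)) ≤
      1 / 2 * Wm - P / 2 * (sm ^ 2 + tm ^ 2) + eps := by
  linarith

lemma continuous_cost [SecondCountableTopology X] (s t : ℝ) :
    Continuous (fun z : (X × X) × (X × X) => ‖expMap s z.1 - expMap t z.2‖ ^ 2) :=
  (((continuous_expMap s).comp continuous_fst).sub
    ((continuous_expMap t).comp continuous_snd)).norm.pow 2

/-- Any coupling of `Φ₀, Φ₁` gives an upper bound for the transport cost of the pushforwards. -/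
lemma W2sq_le_integral [SecondCountableTopology X] (Φ₀ Φ₁ : Measure (X × X)) (s t : ℝ)
    (Θ : Measure ((X × X) × (X × X))) [IsProbabilityMeasure Θ] (hΘ : IsCoupling Θ Φ₀ Φ₁) :
    W2sq (Φ₀.map (expMap s)) (Φ₁.map (expMap t)) ≤
      ∫ z, ‖expMap s z.1 - expMap t z.2‖ ^ 2 ∂Θ := by
  have hF : Measurable (Prod.map (expMap (X := X) s) (expMap (X := X) t)) :=
    (measurable_expMap s).prodMap (measurable_expMap t)
  apply csInf_le
  · refine ⟨0, fun c hc => ?_⟩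
    obtain ⟨γ, _, _, rfl⟩ := hc
    exact integral_nonneg fun p => by positivity
  · refine ⟨Θ.map (Prod.map (expMap s) (expMap t)),
      Measure.isProbabilityMeasure_map hF.aemeasurable, ⟨?_, ?_⟩, ?_⟩
    · rw [Measure.map_map measurable_fst hF]
      have h : (Prod.fst ∘ Prod.map (expMap (X := X) s) (expMap (X := X) t)) =
          expMap s ∘ Prod.fst := rfl
      rw [h, ← Measure.map_map (measurable_expMap s) measurable_fst, hΘ.1]
    · rw [Measure.map_map measurable_snd hF]
      have h : (Prod.snd ∘ Prod.map (expMap (X := X) s) (expMap (X := X) t)) =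
          expMap t ∘ Prod.snd := rfl
      rw [h, ← Measure.map_map (measurable_expMap t) measurable_snd, hΘ.2]
    · rw [integral_map hF.aemeasurable]
      · rfl
      · exact ((continuous_fst.sub continuous_snd).norm.pow 2).aestronglyMeasurable

end Aux

set_option maxHeartbeats 2000000 in
/-- Semiconcavity of the squared Wasserstein distance along exponential deformations:
`(s,t) ↦ (1/2)W₂²(exp^s_♯Φ₀, exp^t_♯Φ₁) - (φ²/2)(s² + t²)` is concave on `ℝ²`, where
`φ² = |Φ₀|₂² + |Φ₁|₂²`. -/
theorem semiconcavity_W2sq_expMap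
    [CompleteSpace X] [SecondCountableTopology X]
    (Φ₀ Φ₁ : Measure (X × X))
    (h0 : IsProbabilityMeasure Φ₀) (h1 : IsProbabilityMeasure Φ₁)
    (hi0 : Integrable (fun p : X × X => ‖p.1‖ ^ 2 + ‖p.2‖ ^ 2) Φ₀)
    (hi1 : Integrable (fun p : X × X => ‖p.1‖ ^ 2 + ‖p.2‖ ^ 2) Φ₁) :
    ConcaveOn ℝ Set.univ (fun q : ℝ × ℝ =>
      (1 / 2) * W2sq (Φ₀.map (expMap q.1)) (Φ₁.map (expMap q.2)) -
        ((∫ p, ‖p.2‖ ^ 2 ∂Φ₀ + ∫ p, ‖p.2‖ ^ 2 ∂Φ₁) / 2) * (q.1 ^ 2 + q.2 ^ 2)) := by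
  haveI := h0; haveI := h1
  set P : ℝ := ∫ p, ‖p.2‖ ^ 2 ∂Φ₀ + ∫ p, ‖p.2‖ ^ 2 ∂Φ₁ with hP
  have hPnn : 0 ≤ P := add_nonneg (integral_nonneg fun p => by positivity)
    (integral_nonneg fun p => by positivity)
  refine ⟨convex_univ, ?_⟩
  rintro ⟨s₀, t₀⟩ - ⟨s₁, t₁⟩ - a b ha hb hab
  have hb' : b = 1 - a := by linarith
  subst hb'
  simp only [Prod.smul_mk, Prod.mk_add_mk, smul_eq_mul]
  set sm : ℝ := a * s₀ + (1 - a) * s₁ with hsm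
  set tm : ℝ := a * t₀ + (1 - a) * t₁ with htm
  refine le_of_forall_pos_le_add fun ε hε => ?_
  -- near-optimal coupling for the midpoint
  set S : Set ℝ := {c : ℝ | ∃ γ : Measure (X × X), IsProbabilityMeasure γ ∧
    IsCoupling γ (Φ₀.map (expMap sm)) (Φ₁.map (expMap tm)) ∧
    c = ∫ p, ‖p.1 - p.2‖ ^ 2 ∂γ} with hSdef
  have hWdef : W2sq (Φ₀.map (expMap sm)) (Φ₁.map (expMap tm)) = sInf S := rfl
  haveI : IsProbabilityMeasure (Φ₀.map (expMap sm)) :=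
    Measure.isProbabilityMeasure_map (measurable_expMap sm).aemeasurable
  haveI : IsProbabilityMeasure (Φ₁.map (expMap tm)) :=
    Measure.isProbabilityMeasure_map (measurable_expMap tm).aemeasurable
  have hne : S.Nonempty := by
    refine ⟨_, (Φ₀.map (expMap sm)).prod (Φ₁.map (expMap tm)), inferInstance,
      ⟨?_, ?_⟩, rfl⟩
    · exact Measure.fst_prod
    · exact Measure.snd_prod
  have hlt : sInf S < sInf S + 2 * ε := by linarith
  obtain ⟨c, hcS, hclt⟩ := exists_lt_of_csInf_lt hne hlt
  obtain ⟨γ, hγp, hγc, rfl⟩ := hcS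
  haveI := hγp
  obtain ⟨Θ, hΘp, hΘc, hΘmap⟩ := exists_lift Φ₀ Φ₁ sm tm γ hγc
  haveI := hΘp
  -- integrability transfers
  have hcf : Continuous (fun p : X × X => ‖p.1‖ ^ 2 + ‖p.2‖ ^ 2) :=
    (continuous_fst.norm.pow 2).add (continuous_snd.norm.pow 2)
  have hT0 := integral_comp_fst Θ Φ₀ hΘc.1 hcf.aestronglyMeasurable
  have hT1 := integral_comp_snd Θ Φ₁ hΘc.2 hcf.aestronglyMeasurable
  have hI0 : Integrable (fun z : (X × X) × (X × X) => ‖z.1.1‖ ^ 2 + ‖z.1.2‖ ^ 2) Θ := hT0.2 hi0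
  have hI1 : Integrable (fun z : (X × X) × (X × X) => ‖z.2.1‖ ^ 2 + ‖z.2.2‖ ^ 2) Θ := hT1.2 hi1
  -- integrability of all costs
  have hcost_int : ∀ s t : ℝ,
      Integrable (fun z : (X × X) × (X × X) => ‖expMap s z.1 - expMap t z.2‖ ^ 2) Θ := by
    intro s t
    refine Integrable.mono' (((hI0.const_mul (4 + 4 * s ^ 2)).add
      (hI1.const_mul (4 + 4 * t ^ 2))))
      (continuous_cost s t).aestronglyMeasurable (Filter.Eventually.of_forall fun z => ?_)
    rw [Real.norm_eq_abs, abs_of_nonneg (by positivity)]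
    exact cost_bound s t z.1 z.2
  -- second moments of the velocities, under Θ
  have hcg : Continuous (fun p : X × X => ‖p.2‖ ^ 2) := continuous_snd.norm.pow 2
  have hg0m : Integrable (fun p : X × X => ‖p.2‖ ^ 2) Φ₀ := by
    refine hi0.mono' hcg.aestronglyMeasurable (Filter.Eventually.of_forall fun p => ?_)
    rw [Real.norm_eq_abs, abs_of_nonneg (by positivity)]
    nlinarith [sq_nonneg ‖p.1‖]
  have hg1m : Integrable (fun p : X × X => ‖p.2‖ ^ 2) Φ₁ := by
    refine hi1.mono' hcg.aestronglyMeasurable (Filter.Eventually.of_forall fun p => ?_)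
    rw [Real.norm_eq_abs, abs_of_nonneg (by positivity)]
    nlinarith [sq_nonneg ‖p.1‖]
  have hU0 := integral_comp_fst Θ Φ₀ hΘc.1 hcg.aestronglyMeasurable
  have hU1 := integral_comp_snd Θ Φ₁ hΘc.2 hcg.aestronglyMeasurable
  have hg0 : Integrable (fun z : (X × X) × (X × X) => ‖z.1.2‖ ^ 2) Θ := hU0.2 hg0m
  have hg1 : Integrable (fun z : (X × X) × (X × X) => ‖z.2.2‖ ^ 2) Θ := hU1.2 hg1m
  -- cost functions
  set c₀ : (X × X) × (X × X) → ℝ := fun z => ‖expMap s₀ z.1 - expMap t₀ z.2‖ ^ 2 with hc₀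
  set c₁ : (X × X) × (X × X) → ℝ := fun z => ‖expMap s₁ z.1 - expMap t₁ z.2‖ ^ 2 with hc₁
  set dsq : (X × X) × (X × X) → ℝ :=
    fun z => ‖(s₀ - s₁) • z.1.2 - (t₀ - t₁) • z.2.2‖ ^ 2 with hdsq
  have hdsq_cont : Continuous dsq := by
    rw [hdsq]
    exact ((continuous_fst.snd.const_smul (s₀ - s₁)).sub
      (continuous_snd.snd.const_smul (t₀ - t₁))).norm.pow 2
  have hdsq_int : Integrable dsq Θ := by
    refine Integrable.mono' ((hg0.add hg1).const_mul ((s₀ - s₁) ^ 2 + (t₀ - t₁) ^ 2))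
      hdsq_cont.aestronglyMeasurable (Filter.Eventually.of_forall fun z => ?_)
    rw [Real.norm_eq_abs, abs_of_nonneg (by positivity)]
    exact norm_smul_sub_smul_sq_le _ _ _ _
  -- pointwise decomposition of the midpoint cost
  have hpt : ∀ z : (X × X) × (X × X), ‖expMap sm z.1 - expMap tm z.2‖ ^ 2 =
      a * c₀ z + (1 - a) * c₁ z - a * (1 - a) * dsq z := by
    intro z
    have hvec : expMap sm z.1 - expMap tm z.2 =
        a • (expMap s₀ z.1 - expMap t₀ z.2) + (1 - a) • (expMap s₁ z.1 - expMap t₁ z.2) := by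
      simp only [expMap, hsm, htm]
      module
    have hsub : (expMap s₀ z.1 - expMap t₀ z.2) - (expMap s₁ z.1 - expMap t₁ z.2) =
        (s₀ - s₁) • z.1.2 - (t₀ - t₁) • z.2.2 := by
      simp only [expMap]
      module
    rw [hvec, hilbert_sq_id _ _ (by ring : a + (1 - a) = (1 : ℝ)), hsub]
  -- the transported cost equals the cost of γ
  have hF : Measurable (Prod.map (expMap (X := X) sm) (expMap (X := X) tm)) :=
    (measurable_expMap sm).prodMap (measurable_expMap tm)
  have hcost_eq : ∫ p, ‖p.1 - p.2‖ ^ 2 ∂γ = ∫ z, ‖expMap sm z.1 - expMap tm z.2‖ ^ 2 ∂Θ := by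
    rw [← hΘmap, integral_map hF.aemeasurable (f := fun p : X × X => ‖p.1 - p.2‖ ^ 2)
      ((continuous_fst.sub continuous_snd).norm.pow 2).aestronglyMeasurable]
    rfl
  -- decomposition of the integral
  have hint_dec : ∫ z, ‖expMap sm z.1 - expMap tm z.2‖ ^ 2 ∂Θ =
      a * ∫ z, c₀ z ∂Θ + (1 - a) * ∫ z, c₁ z ∂Θ - a * (1 - a) * ∫ z, dsq z ∂Θ := by
    have h1 : (fun z => ‖expMap sm z.1 - expMap tm z.2‖ ^ 2) =
        fun z => a * c₀ z + (1 - a) * c₁ z - a * (1 - a) * dsq z := funext hpt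
    have hm0 : Integrable (fun z => a * c₀ z) Θ := (hcost_int s₀ t₀).const_mul a
    have hm1 : Integrable (fun z => (1 - a) * c₁ z) Θ := (hcost_int s₁ t₁).const_mul (1 - a)
    have hmd : Integrable (fun z => a * (1 - a) * dsq z) Θ := hdsq_int.const_mul _
    have hadd : Integrable (fun z => a * c₀ z + (1 - a) * c₁ z) Θ := hm0.add hm1
    rw [h1, integral_sub hadd hmd, integral_add hm0 hm1,
      integral_const_mul, integral_const_mul, integral_const_mul]
  -- lower bounds for endpoint costs
  have hA : W2sq (Φ₀.map (expMap s₀)) (Φ₁.map (expMap t₀)) ≤ ∫ z, c₀ z ∂Θ :=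
    W2sq_le_integral Φ₀ Φ₁ s₀ t₀ Θ hΘc
  have hB : W2sq (Φ₀.map (expMap s₁)) (Φ₁.map (expMap t₁)) ≤ ∫ z, c₁ z ∂Θ :=
    W2sq_le_integral Φ₀ Φ₁ s₁ t₁ Θ hΘc
  -- upper bound for the defect term
  have hD : ∫ z, dsq z ∂Θ ≤ ((s₀ - s₁) ^ 2 + (t₀ - t₁) ^ 2) * P := by
    have h1 : ∫ z, dsq z ∂Θ ≤
        ∫ z, ((s₀ - s₁) ^ 2 + (t₀ - t₁) ^ 2) * (‖z.1.2‖ ^ 2 + ‖z.2.2‖ ^ 2) ∂Θ := by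
      refine integral_mono hdsq_int ((hg0.add hg1).const_mul _) fun z => ?_
      exact norm_smul_sub_smul_sq_le _ _ _ _
    have h2 : ∫ z, ((s₀ - s₁) ^ 2 + (t₀ - t₁) ^ 2) * (‖z.1.2‖ ^ 2 + ‖z.2.2‖ ^ 2) ∂Θ =
        ((s₀ - s₁) ^ 2 + (t₀ - t₁) ^ 2) * P := by
      rw [integral_const_mul, integral_add hg0 hg1, hU0.1, hU1.1]
    linarith
  -- final arithmetic
  have key : a * ∫ z, c₀ z ∂Θ + (1 - a) * ∫ z, c₁ z ∂Θ - a * (1 - a) * ∫ z, dsq z ∂Θ <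
      W2sq (Φ₀.map (expMap sm)) (Φ₁.map (expMap tm)) + 2 * ε := by
    rw [hWdef]
    calc a * ∫ z, c₀ z ∂Θ + (1 - a) * ∫ z, c₁ z ∂Θ - a * (1 - a) * ∫ z, dsq z ∂Θ
        = ∫ p, ‖p.1 - p.2‖ ^ 2 ∂γ := by rw [hcost_eq, hint_dec]
      _ < sInf S + 2 * ε := hclt
  have k0 : a * W2sq (Φ₀.map (expMap s₀)) (Φ₁.map (expMap t₀)) ≤ a * ∫ z, c₀ z ∂Θ :=
    mul_le_mul_of_nonneg_left hA ha
  have k1 : (1 - a) * W2sq (Φ₀.map (expMap s₁)) (Φ₁.map (expMap t₁)) ≤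
      (1 - a) * ∫ z, c₁ z ∂Θ := mul_le_mul_of_nonneg_left hB hb
  have k2 : a * (1 - a) * ∫ z, dsq z ∂Θ ≤
      a * (1 - a) * (((s₀ - s₁) ^ 2 + (t₀ - t₁) ^ 2) * P) :=
    mul_le_mul_of_nonneg_left hD (mul_nonneg ha hb)
  have hq : P * (sm ^ 2 + tm ^ 2) = P * (a * (s₀ ^ 2 + t₀ ^ 2) + (1 - a) * (s₁ ^ 2 + t₁ ^ 2) -
      a * (1 - a) * ((s₀ - s₁) ^ 2 + (t₀ - t₁) ^ 2)) := by
    rw [hsm, htm]; ring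
  exact final_arith _ _ _ _ _ _ _ _ _ _ _ _ _ _ _ key k0 k1 k2 hq

end
end

section
/- Let X be a separable Hilbert space, μ₀, μ₁ ∈ P₂(X), Φ₀ a probability on X×X with finite second moments and first marginal μ₀, Φ₁ with first marginal μ₁. Then for every t > 0 and every coupling Θ of Φ₀ and Φ₁ whose (x₀,x₁)-marginal is an optimal plan between μ₀ and μ₁: W₂²(exp^t_♯Φ₀, exp^t_♯Φ₁) ≤ W₂²(μ₀, μ₁) + 2t ∫⟨x₀−x₁, v₀−v₁⟩ dΘ + t² ∫|v₀−v₁|² dΘ. -/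
open MeasureTheory Filter Topology
open scoped RealInnerProductSpace ENNReal

noncomputable section

variable {X : Type*} [NormedAddCommGroup X] [InnerProductSpace ℝ X]
  [MeasurableSpace X] [BorelSpace X]

/-- Expansion of the squared Wasserstein distance along a single exponential step: for a
coupling `Θ` of `Φ₀, Φ₁` whose position marginal is optimal,
`W₂²(exp^t_♯Φ₀, exp^t_♯Φ₁) ≤ W₂²(μ₀,μ₁) + 2t∫⟨x₀-x₁, v₀-v₁⟩dΘ + t²∫|v₀-v₁|²dΘ`. -/
theorem W2sq_expMap_le
    [CompleteSpace X] [SecondCountableTopology X]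
    (μ₀ μ₁ : Measure X) (Φ₀ Φ₁ : Measure (X × X))
    (hμ₀ : IsProbabilityMeasure μ₀) (hμ₁ : IsProbabilityMeasure μ₁)
    (h0 : IsProbabilityMeasure Φ₀) (h1 : IsProbabilityMeasure Φ₁)
    (hm0 : Φ₀.map Prod.fst = μ₀) (hm1 : Φ₁.map Prod.fst = μ₁)
    (hi0 : Integrable (fun p : X × X => ‖p.1‖ ^ 2 + ‖p.2‖ ^ 2) Φ₀)
    (hi1 : Integrable (fun p : X × X => ‖p.1‖ ^ 2 + ‖p.2‖ ^ 2) Φ₁)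
    (Θ : Measure ((X × X) × (X × X))) (hΘp : IsProbabilityMeasure Θ)
    (hΘc : IsCoupling Θ Φ₀ Φ₁)
    (hopt : ∫ q, ‖q.1.1 - q.2.1‖ ^ 2 ∂Θ = W2sq μ₀ μ₁)
    (t : ℝ) (ht : 0 < t) :
    W2sq (Φ₀.map (expMap t)) (Φ₁.map (expMap t)) ≤
      W2sq μ₀ μ₁ + 2 * t * ∫ q, ⟪q.1.1 - q.2.1, q.1.2 - q.2.2⟫ ∂Θ +
        t ^ 2 * ∫ q, ‖q.1.2 - q.2.2‖ ^ 2 ∂Θ := by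
  classical
  have hexp : Measurable (expMap t : X × X → X) := by
    have hc : Continuous (expMap t : X × X → X) := by
      unfold expMap; fun_prop
    exact hc.measurable
  set F : (X × X) × (X × X) → X × X :=
    fun q => (expMap t q.1, expMap t q.2) with hF
  have hFmeas : Measurable F := (hexp.comp measurable_fst).prodMk (hexp.comp measurable_snd)
  set γ := Θ.map F with hγ
  have hγp : IsProbabilityMeasure γ := Measure.isProbabilityMeasure_map hFmeas.aemeasurable
  have hγc : IsCoupling γ (Φ₀.map (expMap t)) (Φ₁.map (expMap t)) := by
    constructor
    · rw [hγ, Measure.map_map measurable_fst hFmeas]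
      have h1' : (Prod.fst ∘ F) = (expMap t) ∘ (Prod.fst : (X×X)×(X×X) → X×X) := rfl
      rw [h1', ← Measure.map_map hexp measurable_fst, hΘc.1]
    · rw [hγ, Measure.map_map measurable_snd hFmeas]
      have h2' : (Prod.snd ∘ F) = (expMap t) ∘ (Prod.snd : (X×X)×(X×X) → X×X) := rfl
      rw [h2', ← Measure.map_map hexp measurable_snd, hΘc.2]
  have hcont : Continuous (fun p : X × X => ‖p.1 - p.2‖ ^ 2) := by fun_prop
  have hmapint : ∫ p, ‖p.1 - p.2‖ ^ 2 ∂γ = ∫ q, ‖(F q).1 - (F q).2‖ ^ 2 ∂Θ :=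
    integral_map hFmeas.aemeasurable hcont.aestronglyMeasurable
  have hpt : ∀ q : (X × X) × (X × X), ‖(F q).1 - (F q).2‖ ^ 2
      = ‖q.1.1 - q.2.1‖ ^ 2 + 2 * t * ⟪q.1.1 - q.2.1, q.1.2 - q.2.2⟫
        + t ^ 2 * ‖q.1.2 - q.2.2‖ ^ 2 := by
    intro q
    have hd : (F q).1 - (F q).2 = (q.1.1 - q.2.1) + t • (q.1.2 - q.2.2) := by
      simp only [hF, expMap, smul_sub]
      abel
    rw [hd, norm_add_sq_real, real_inner_smul_right, norm_smul, mul_pow,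
      Real.norm_eq_abs, sq_abs]
    ring
  -- integrability of the marginal second moments under Θ
  have hcs : Continuous (fun p : X × X => ‖p.1‖ ^ 2 + ‖p.2‖ ^ 2) := by fun_prop
  have hms0 : Integrable (fun q : (X × X) × (X × X) => ‖q.1.1‖ ^ 2 + ‖q.1.2‖ ^ 2) Θ := by
    have h := hi0
    rw [← hΘc.1, integrable_map_measure hcs.aestronglyMeasurable
      measurable_fst.aemeasurable] at h
    exact h
  have hms1 : Integrable (fun q : (X × X) × (X × X) => ‖q.2.1‖ ^ 2 + ‖q.2.2‖ ^ 2) Θ := by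
    have h := hi1
    rw [← hΘc.2, integrable_map_measure hcs.aestronglyMeasurable
      measurable_snd.aemeasurable] at h
    exact h
  have hg : Integrable (fun q : (X × X) × (X × X) =>
      2 * (‖q.1.1‖ ^ 2 + ‖q.1.2‖ ^ 2) + 2 * (‖q.2.1‖ ^ 2 + ‖q.2.2‖ ^ 2)) Θ :=
    (hms0.const_mul 2).add (hms1.const_mul 2)
  have I1 : Integrable (fun q : (X × X) × (X × X) => ‖q.1.1 - q.2.1‖ ^ 2) Θ := by
    refine hg.mono' ?_ ?_
    · exact (Continuous.aestronglyMeasurable (by fun_prop))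
    · filter_upwards with q
      have h1 : ‖q.1.1 - q.2.1‖ ≤ ‖q.1.1‖ + ‖q.2.1‖ := norm_sub_le _ _
      have h2 : (0:ℝ) ≤ ‖q.1.1 - q.2.1‖ := norm_nonneg _
      rw [Real.norm_eq_abs, abs_of_nonneg (by positivity)]
      nlinarith [norm_nonneg q.1.1, norm_nonneg q.2.1, norm_nonneg q.1.2, norm_nonneg q.2.2,
        sq_nonneg (‖q.1.1‖ - ‖q.2.1‖)]
  have I3 : Integrable (fun q : (X × X) × (X × X) => ‖q.1.2 - q.2.2‖ ^ 2) Θ := by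
    refine hg.mono' ?_ ?_
    · exact (Continuous.aestronglyMeasurable (by fun_prop))
    · filter_upwards with q
      have h1 : ‖q.1.2 - q.2.2‖ ≤ ‖q.1.2‖ + ‖q.2.2‖ := norm_sub_le _ _
      have h2 : (0:ℝ) ≤ ‖q.1.2 - q.2.2‖ := norm_nonneg _
      rw [Real.norm_eq_abs, abs_of_nonneg (by positivity)]
      nlinarith [norm_nonneg q.1.1, norm_nonneg q.2.1, norm_nonneg q.1.2, norm_nonneg q.2.2,
        sq_nonneg (‖q.1.2‖ - ‖q.2.2‖)]
  have I13 : Integrable (fun q : (X × X) × (X × X) => ‖q.1.1 - q.2.1‖ ^ 2 + ‖q.1.2 - q.2.2‖ ^ 2) Θ := I1.add I3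
  have I2 : Integrable (fun q : (X × X) × (X × X) => ⟪q.1.1 - q.2.1, q.1.2 - q.2.2⟫) Θ := by
    refine I13.mono' ?_ ?_
    · exact Continuous.aestronglyMeasurable <|
        ((continuous_fst.fst.sub continuous_snd.fst).inner (continuous_fst.snd.sub continuous_snd.snd))
    · filter_upwards with q
      have h1 := abs_real_inner_le_norm (q.1.1 - q.2.1) (q.1.2 - q.2.2)
      have h2 : ‖q.1.1 - q.2.1‖ * ‖q.1.2 - q.2.2‖ ≤ ‖q.1.1 - q.2.1‖ ^ 2 + ‖q.1.2 - q.2.2‖ ^ 2 := by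
        nlinarith [sq_nonneg (‖q.1.1 - q.2.1‖ - ‖q.1.2 - q.2.2‖), norm_nonneg (q.1.1 - q.2.1),
          norm_nonneg (q.1.2 - q.2.2)]
      rw [Real.norm_eq_abs]
      linarith
  have I2m : Integrable (fun q : (X × X) × (X × X) =>
      2 * t * ⟪q.1.1 - q.2.1, q.1.2 - q.2.2⟫) Θ := I2.const_mul _
  have I3m : Integrable (fun q : (X × X) × (X × X) =>
      t ^ 2 * ‖q.1.2 - q.2.2‖ ^ 2) Θ := I3.const_mul _
  have hsplit : ∫ q, ‖(F q).1 - (F q).2‖ ^ 2 ∂Θ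
      = (∫ q, ‖q.1.1 - q.2.1‖ ^ 2 ∂Θ)
        + 2 * t * (∫ q, ⟪q.1.1 - q.2.1, q.1.2 - q.2.2⟫ ∂Θ)
        + t ^ 2 * (∫ q, ‖q.1.2 - q.2.2‖ ^ 2 ∂Θ) := by
    calc ∫ q, ‖(F q).1 - (F q).2‖ ^ 2 ∂Θ
        = ∫ q, (‖q.1.1 - q.2.1‖ ^ 2 + 2 * t * ⟪q.1.1 - q.2.1, q.1.2 - q.2.2⟫
            + t ^ 2 * ‖q.1.2 - q.2.2‖ ^ 2) ∂Θ := by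
          exact integral_congr_ae (Filter.Eventually.of_forall hpt)
      _ = _ := by
          have I12 : Integrable (fun q : (X × X) × (X × X) =>
              ‖q.1.1 - q.2.1‖ ^ 2 + 2 * t * ⟪q.1.1 - q.2.1, q.1.2 - q.2.2⟫) Θ := I1.add I2m
          rw [integral_add I12 I3m, integral_add I1 I2m,
            integral_const_mul, integral_const_mul]
  -- W2sq is at most the cost of γ
  have hle : W2sq (Φ₀.map (expMap t)) (Φ₁.map (expMap t)) ≤ ∫ p, ‖p.1 - p.2‖ ^ 2 ∂γ := by
    apply csInf_le
    · refine ⟨0, ?_⟩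
      rintro c ⟨γ', _, _, rfl⟩
      exact integral_nonneg fun p => by positivity
    · exact ⟨γ, hγp, hγc, rfl⟩
  rw [hmapint, hsplit, hopt] at hle
  exact hle

end
end
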